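/- Define f, g : ℝ → ℝ by f(x) = exp(1/x) and g(x) = exp(−1/x²) for x < 0, and f(x) = g(x) = 0 for x ≥ 0. Let F ⊆ ℝ² be the union of the graphs of f and −f, and G ⊆ ℝ² the union of the graphs of g and −g. Then there exists no C¹ diffeomorphism φ : ℝ² → ℝ² (a bijection which is continuously differentiable with continuously differentiable inverse) such that φ(F) = G. -/

import Mathlib

/-- `f x = exp (1/x)` for `x < 0`, and `0` for `x ≥ 0`. -/
noncomputable def f (x : ℝ) : ℝ := if x < 0 then Real.exp (1 / x) else 0

/-- `g x = exp (-1/x²)` for `x < 0`, and `0` for `x ≥ 0`. -/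
noncomputable def g (x : ℝ) : ℝ := if x < 0 then Real.exp (-1 / x ^ 2) else 0

/-- `F` is the union of the graphs of `f` and `-f`. -/
noncomputable def F : Set (ℝ × ℝ) := {p | p.2 = f p.1 ∨ p.2 = -f p.1}

/-- `G` is the union of the graphs of `g` and `-g`. -/
noncomputable def G : Set (ℝ × ℝ) := {p | p.2 = g p.1 ∨ p.2 = -g p.1}

open Real Set Metric

lemma f_of_neg {x : ℝ} (hx : x < 0) : f x = Real.exp (1 / x) := if_pos hx
lemma f_of_nonneg {x : ℝ} (hx : 0 ≤ x) : f x = 0 := if_neg (not_lt.2 hx)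
lemma f_nonneg (x : ℝ) : 0 ≤ f x := by
  by_cases hx : x < 0
  · rw [f_of_neg hx]; exact (Real.exp_pos _).le
  · rw [f_of_nonneg (not_lt.1 hx)]
lemma f_pos_of_neg {x : ℝ} (hx : x < 0) : 0 < f x := by
  rw [f_of_neg hx]; exact Real.exp_pos _

/-- key bound : `exp (-(1/t)) ≤ t` for `t > 0`. -/
lemma exp_neg_one_div_le {t : ℝ} (ht : 0 < t) : Real.exp (-(1 / t)) ≤ t := by
  have h1 : 1 / t ≤ Real.exp (1 / t) := by
    have := Real.add_one_le_exp (1 / t)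
    linarith
  rw [Real.exp_neg]
  rw [inv_le_comm₀ (Real.exp_pos _) ht]
  calc t⁻¹ = 1 / t := (one_div t).symm
  _ ≤ Real.exp (1 / t) := h1

lemma f_le_neg_self {x : ℝ} (hx : x < 0) : f x ≤ -x := by
  rw [f_of_neg hx]
  have : (1:ℝ) / x = -(1 / (-x)) := by field_simp
  rw [this]
  exact exp_neg_one_div_le (by linarith)

lemma f_abs_le (x : ℝ) : |f x| ≤ |x| := by
  rw [abs_of_nonneg (f_nonneg x)]
  by_cases hx : x < 0
  · calc f x ≤ -x := f_le_neg_self hx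
    _ ≤ |x| := (neg_le_abs x)
  · rw [f_of_nonneg (not_lt.1 hx)]; exact abs_nonneg x

lemma continuous_f : Continuous f := by
  rw [continuous_iff_continuousAt]
  intro x
  rcases lt_trichotomy x 0 with hx | hx | hx
  · have h2 : f =ᶠ[nhds x] (fun y => Real.exp (1 / y)) := by
      filter_upwards [eventually_lt_nhds hx] with y hy using f_of_neg hy
    have hc : ContinuousAt (fun y => Real.exp (1 / y)) x :=
      (Real.continuous_exp.continuousAt).comp
        ((continuousAt_const.div continuousAt_id (ne_of_lt hx)))
    exact hc.congr h2.symm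
  · subst hx
    have h0 : f 0 = 0 := f_of_nonneg le_rfl
    rw [ContinuousAt, h0]
    have : Filter.Tendsto (fun y : ℝ => |y|) (nhds (0:ℝ)) (nhds (0:ℝ)) := by
      simpa using continuous_abs.tendsto (0:ℝ)
    apply squeeze_zero (fun t => f_nonneg t) (fun t => (le_abs_self (f t)).trans (f_abs_le t)) this
  · have h2 : f =ᶠ[nhds x] (fun _ => (0:ℝ)) := by
      filter_upwards [eventually_gt_nhds hx] with y hy using f_of_nonneg hy.le
    exact continuousAt_const.congr h2.symm


lemma exists_lip {φ : ℝ × ℝ → ℝ × ℝ} (h : ContDiff ℝ 1 φ) (R : ℝ) :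
    ∃ K : ℝ, 1 ≤ K ∧ ∀ a ∈ closedBall (0:ℝ×ℝ) R, ∀ b ∈ closedBall (0:ℝ×ℝ) R,
      dist (φ a) (φ b) ≤ K * dist a b := by
  obtain ⟨C, hC⟩ := (isCompact_closedBall (0:ℝ×ℝ) R).exists_bound_of_continuousOn
    ((h.continuous_fderiv one_ne_zero).continuousOn)
  refine ⟨max C 1, le_max_right _ _, fun a ha b hb => ?_⟩
  have hlip : LipschitzOnWith (Real.toNNReal (max C 1)) φ (closedBall 0 R) := by
    refine (convex_closedBall _ _).lipschitzOnWith_of_nnnorm_fderiv_le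
      (fun x _ => (h.differentiable one_ne_zero) x) (fun x hx => ?_)
    rw [← norm_toNNReal]
    exact Real.toNNReal_le_toNNReal ((hC x hx).trans (le_max_left _ _))
  have := hlip.dist_le_mul a ha b hb
  rwa [Real.coe_toNNReal _ (le_trans zero_le_one (le_max_right C 1))] at this

lemma g_of_neg {x : ℝ} (hx : x < 0) : g x = Real.exp (-(1 / x ^ 2)) := by
  rw [g, if_pos hx, neg_div, one_div]

lemma g_of_nonneg {x : ℝ} (hx : 0 ≤ x) : g x = 0 := if_neg (not_lt.2 hx)

lemma g_pos_of_neg {x : ℝ} (hx : x < 0) : 0 < g x := by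
  rw [g_of_neg hx]; exact Real.exp_pos _

-- membership in F
lemma graph_f_mem_F (x : ℝ) : (x, f x) ∈ F := Or.inl rfl
lemma graph_negf_mem_F (x : ℝ) : (x, -f x) ∈ F := Or.inr rfl
lemma ray_mem_F {x : ℝ} (hx : 0 ≤ x) : ((x, 0) : ℝ × ℝ) ∈ F := by
  left; exact (f_of_nonneg hx).symm

lemma F_zero_snd {p : ℝ × ℝ} (hp : p ∈ F) (h2 : p.2 = 0) : 0 ≤ p.1 := by
  by_contra h
  push_neg at h
  have := f_pos_of_neg h
  rcases hp with h' | h' <;> rw [h2] at h' <;> linarith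

lemma F_pos_snd {p : ℝ × ℝ} (hp : p ∈ F) (h2 : 0 < p.2) : p.2 = f p.1 ∧ p.1 < 0 := by
  have he : p.2 = f p.1 := by
    rcases hp with h' | h'
    · exact h'
    · have := f_nonneg p.1; linarith
  refine ⟨he, ?_⟩
  by_contra h
  push_neg at h
  rw [f_of_nonneg h] at he; linarith

lemma F_neg_snd {p : ℝ × ℝ} (hp : p ∈ F) (h2 : p.2 < 0) : p.2 = -f p.1 ∧ p.1 < 0 := by
  have he : p.2 = -f p.1 := by
    rcases hp with h' | h'
    · have := f_nonneg p.1; linarith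
    · exact h'
  refine ⟨he, ?_⟩
  by_contra h
  push_neg at h
  rw [f_of_nonneg h] at he; simp at he; linarith

lemma G_pos_fst {p : ℝ × ℝ} (hp : p ∈ G) (h1 : 0 < p.1) : p.2 = 0 := by
  rcases hp with h' | h' <;> rw [h', g_of_nonneg h1.le] <;> simp

lemma G_zero_snd {p : ℝ × ℝ} (hp : p ∈ G) (h2 : p.2 = 0) : 0 ≤ p.1 := by
  by_contra h
  push_neg at h
  have := g_pos_of_neg h
  rcases hp with h' | h' <;> rw [h2] at h' <;> linarith

/-- separation lemma 1 : a preconnected subset of `G` avoiding the origin cannot contain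
a point with positive `y` and a point with nonpositive `y`. -/
lemma sep₁ {S : Set (ℝ × ℝ)} {a b : ℝ × ℝ} (hS : S ⊆ G) (h0 : ((0:ℝ), (0:ℝ)) ∉ S)
    (hc : IsPreconnected S) (ha : a ∈ S) (ha2 : 0 < a.2) (hb : b ∈ S) (hb2 : b.2 ≤ 0) :
    False := by
  have hzero : ∀ w ∈ S, w.2 = 0 → 0 < w.1 := by
    intro w hw hw2
    rcases lt_or_eq_of_le (G_zero_snd (hS hw) hw2) with h | h
    · exact h
    · exfalso
      apply h0
      have : w = ((0:ℝ), (0:ℝ)) := Prod.ext h.symm hw2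
      rwa [this] at hw
  have hU : IsOpen {p : ℝ × ℝ | 0 < p.2} := isOpen_lt continuous_const continuous_snd
  have hV : IsOpen ({p : ℝ × ℝ | p.2 < 0} ∪ {p : ℝ × ℝ | 0 < p.1}) :=
    (isOpen_lt continuous_snd continuous_const).union (isOpen_lt continuous_const continuous_fst)
  have hSUV : S ⊆ {p : ℝ × ℝ | 0 < p.2} ∪ ({p : ℝ × ℝ | p.2 < 0} ∪ {p : ℝ × ℝ | 0 < p.1}) := by
    intro w hw
    rcases lt_trichotomy w.2 0 with h | h | h
    · exact Or.inr (Or.inl h)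
    · exact Or.inr (Or.inr (hzero w hw h))
    · exact Or.inl h
  have hbV : b ∈ {p : ℝ × ℝ | p.2 < 0} ∪ {p : ℝ × ℝ | 0 < p.1} := by
    rcases lt_or_eq_of_le hb2 with h | h
    · exact Or.inl h
    · exact Or.inr (hzero b hb h)
  obtain ⟨w, hwS, hwU, hwV⟩ := hc _ _ hU hV hSUV ⟨a, ha, ha2⟩ ⟨b, hb, hbV⟩
  have hwU' : 0 < w.2 := hwU
  rcases hwV with h | h
  · exact absurd hwU' (not_lt.2 (le_of_lt h))
  · have := G_pos_fst (hS hwS) h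
    linarith

/-- separation lemma 2 : a preconnected subset of `G` avoiding the origin cannot contain
a point with negative `y` and a point with nonnegative `y`. -/
lemma sep₂ {S : Set (ℝ × ℝ)} {a b : ℝ × ℝ} (hS : S ⊆ G) (h0 : ((0:ℝ), (0:ℝ)) ∉ S)
    (hc : IsPreconnected S) (ha : a ∈ S) (ha2 : a.2 < 0) (hb : b ∈ S) (hb2 : 0 ≤ b.2) :
    False := by
  have hzero : ∀ w ∈ S, w.2 = 0 → 0 < w.1 := by
    intro w hw hw2
    rcases lt_or_eq_of_le (G_zero_snd (hS hw) hw2) with h | h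
    · exact h
    · exfalso
      apply h0
      have : w = ((0:ℝ), (0:ℝ)) := Prod.ext h.symm hw2
      rwa [this] at hw
  have hU : IsOpen {p : ℝ × ℝ | p.2 < 0} := isOpen_lt continuous_snd continuous_const
  have hV : IsOpen ({p : ℝ × ℝ | 0 < p.2} ∪ {p : ℝ × ℝ | 0 < p.1}) :=
    (isOpen_lt continuous_const continuous_snd).union (isOpen_lt continuous_const continuous_fst)
  have hSUV : S ⊆ {p : ℝ × ℝ | p.2 < 0} ∪ ({p : ℝ × ℝ | 0 < p.2} ∪ {p : ℝ × ℝ | 0 < p.1}) := by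
    intro w hw
    rcases lt_trichotomy w.2 0 with h | h | h
    · exact Or.inl h
    · exact Or.inr (Or.inr (hzero w hw h))
    · exact Or.inr (Or.inl h)
  have hbV : b ∈ {p : ℝ × ℝ | 0 < p.2} ∪ {p : ℝ × ℝ | 0 < p.1} := by
    rcases lt_or_eq_of_le hb2 with h | h
    · exact Or.inl h
    · exact Or.inr (hzero b hb h.symm)
  obtain ⟨w, hwS, hwU, hwV⟩ := hc _ _ hU hV hSUV ⟨a, ha, ha2⟩ ⟨b, hb, hbV⟩
  have hwU' : w.2 < 0 := hwU
  rcases hwV with h | h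
  · have h' : 0 < w.2 := h
    linarith
  · have := G_pos_fst (hS hwS) h
    linarith

lemma pigeon {α : Type*} {T : α → Prop} {Q : α → α → Prop}
    (h : ∀ a b, ((T a ∧ T b) ∨ (¬ T a ∧ ¬ T b)) → Q a b) (w₁ w₂ w₃ : α) :
    Q w₁ w₂ ∨ Q w₁ w₃ ∨ Q w₂ w₃ := by
  by_cases t1 : T w₁ <;> by_cases t2 : T w₂ <;> by_cases t3 : T w₃
  · exact Or.inl (h _ _ (Or.inl ⟨t1, t2⟩))
  · exact Or.inl (h _ _ (Or.inl ⟨t1, t2⟩))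
  · exact Or.inr (Or.inl (h _ _ (Or.inl ⟨t1, t3⟩)))
  · exact Or.inr (Or.inr (h _ _ (Or.inr ⟨t2, t3⟩)))
  · exact Or.inr (Or.inr (h _ _ (Or.inl ⟨t2, t3⟩)))
  · exact Or.inr (Or.inl (h _ _ (Or.inr ⟨t1, t3⟩)))
  · exact Or.inl (h _ _ (Or.inr ⟨t1, t2⟩))
  · exact Or.inl (h _ _ (Or.inr ⟨t1, t2⟩))

lemma F_nonpos_snd {w : ℝ × ℝ} (hw : w ∈ F) (h2 : w.2 ≤ 0) : w.2 = -f w.1 := by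
  rcases hw with h' | h'
  · have h0 : f w.1 = 0 := le_antisymm (h' ▸ h2) (f_nonneg w.1)
    rw [h', h0, neg_zero]
  · exact h'

/-- For `z` on the upper branch : any two points of `F \ {z}` not in the "tail"
`{w | 0 < w.2 ∧ w.1 < z.1}` can be joined to the origin inside `F \ {z}`. -/
lemma claimA2 {z w : ℝ × ℝ} (hzF : z ∈ F) (hz2 : 0 < z.2) (hw : w ∈ F) (hwz : w ≠ z)
    (hT : ¬ (0 < w.2 ∧ w.1 < z.1)) :
    ∃ S : Set (ℝ × ℝ), IsPreconnected S ∧ S ⊆ F ∧ z ∉ S ∧ w ∈ S ∧ ((0:ℝ), (0:ℝ)) ∈ S := by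
  rcases le_or_gt w.2 0 with h2 | h2
  · -- lower region : graph of `-f`
    refine ⟨(fun x => (x, -f x)) '' univ, isPreconnected_univ.image _
      ((continuous_id.prodMk continuous_f.neg).continuousOn), ?_, ?_, ?_, ?_⟩
    · rintro _ ⟨x, -, rfl⟩; exact graph_negf_mem_F x
    · rintro ⟨x, -, hx⟩
      have : z.2 = -f x := congrArg Prod.snd hx.symm
      have := f_nonneg x
      linarith
    · exact ⟨w.1, trivial, by show (w.1, -f w.1) = w; rw [← F_nonpos_snd hw h2]⟩
    · exact ⟨0, trivial, by show ((0:ℝ), -f 0) = ((0:ℝ), (0:ℝ)); rw [f_of_nonneg le_rfl, neg_zero]⟩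
  · -- on the upper branch, beyond z
    obtain ⟨hwe, hw1⟩ := F_pos_snd hw h2
    obtain ⟨hze, hz1⟩ := F_pos_snd hzF hz2
    have hz1w : z.1 < w.1 := by
      rcases lt_or_eq_of_le (not_lt.1 (fun h => hT ⟨h2, h⟩)) with h | h
      · exact h
      · exact absurd (Prod.ext h.symm (by rw [hwe, hze, h])) hwz
    refine ⟨(fun x => (x, f x)) '' Ici w.1, isPreconnected_Ici.image _
      ((continuous_id.prodMk continuous_f).continuousOn), ?_, ?_, ?_, ?_⟩
    · rintro _ ⟨x, -, rfl⟩; exact graph_f_mem_F x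
    · rintro ⟨x, hx, hxz⟩
      have : x = z.1 := congrArg Prod.fst hxz
      rw [this] at hx
      exact absurd (lt_of_lt_of_le hz1w hx) (lt_irrefl _)
    · exact ⟨w.1, self_mem_Ici, by show (w.1, f w.1) = w; rw [← hwe]⟩
    · exact ⟨0, mem_Ici.2 hw1.le, by show ((0:ℝ), f 0) = ((0:ℝ), (0:ℝ)); rw [f_of_nonneg le_rfl]⟩

lemma twoConn_pos {z w₁ w₂ w₃ : ℝ × ℝ} (hzF : z ∈ F) (hz2 : 0 < z.2)
    (h1 : w₁ ∈ F) (h2 : w₂ ∈ F) (h3 : w₃ ∈ F)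
    (n1 : w₁ ≠ z) (n2 : w₂ ≠ z) (n3 : w₃ ≠ z) :
    ∃ S : Set (ℝ × ℝ), IsPreconnected S ∧ S ⊆ F ∧ z ∉ S ∧
      ((w₁ ∈ S ∧ w₂ ∈ S) ∨ (w₁ ∈ S ∧ w₃ ∈ S) ∨ (w₂ ∈ S ∧ w₃ ∈ S)) := by
  have key : ∀ a b : ℝ × ℝ,
      (((0 < a.2 ∧ a.1 < z.1) ∧ (0 < b.2 ∧ b.1 < z.1)) ∨
        (¬ (0 < a.2 ∧ a.1 < z.1) ∧ ¬ (0 < b.2 ∧ b.1 < z.1))) →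
      a ∈ F → b ∈ F → a ≠ z → b ≠ z →
      ∃ S : Set (ℝ × ℝ), IsPreconnected S ∧ S ⊆ F ∧ z ∉ S ∧ a ∈ S ∧ b ∈ S := by
    rintro a b (⟨⟨ha2, ha1⟩, ⟨hb2, hb1⟩⟩ | ⟨ha, hb⟩) haF hbF haz hbz
    · -- both in the tail
      obtain ⟨hae, -⟩ := F_pos_snd haF ha2
      obtain ⟨hbe, -⟩ := F_pos_snd hbF hb2
      refine ⟨(fun x => (x, f x)) '' uIcc a.1 b.1, isPreconnected_uIcc.image _
        ((continuous_id.prodMk continuous_f).continuousOn), ?_, ?_, ?_, ?_⟩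
      · rintro _ ⟨x, -, rfl⟩; exact graph_f_mem_F x
      · rintro ⟨x, hx, hxz⟩
        have hx1 : x = z.1 := congrArg Prod.fst hxz
        have := hx.2
        rw [hx1] at this
        have : z.1 ≤ max a.1 b.1 := this
        rcases max_cases a.1 b.1 with ⟨hm, -⟩ | ⟨hm, -⟩ <;> rw [hm] at this <;> linarith
      · exact ⟨a.1, left_mem_uIcc, by show (a.1, f a.1) = a; rw [← hae]⟩
      · exact ⟨b.1, right_mem_uIcc, by show (b.1, f b.1) = b; rw [← hbe]⟩
    · -- both connectable to the origin
      obtain ⟨Sa, pa, fa, za, wa, oa⟩ := claimA2 hzF hz2 haF haz ha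
      obtain ⟨Sb, pb, fb, zb, wb, ob⟩ := claimA2 hzF hz2 hbF hbz hb
      exact ⟨Sa ∪ Sb, IsPreconnected.union _ oa ob pa pb,
        union_subset fa fb, fun h => h.elim za zb, Or.inl wa, Or.inr wb⟩
  have := pigeon (T := fun w : ℝ × ℝ => 0 < w.2 ∧ w.1 < z.1)
    (Q := fun a b => a ∈ F → b ∈ F → a ≠ z → b ≠ z →
      ∃ S : Set (ℝ × ℝ), IsPreconnected S ∧ S ⊆ F ∧ z ∉ S ∧ a ∈ S ∧ b ∈ S)
    (fun a b h haF hbF haz hbz => key a b h haF hbF haz hbz) w₁ w₂ w₃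
  rcases this with h | h | h
  · obtain ⟨S, hS1, hS2, hS3, hS4, hS5⟩ := h h1 h2 n1 n2
    exact ⟨S, hS1, hS2, hS3, Or.inl ⟨hS4, hS5⟩⟩
  · obtain ⟨S, hS1, hS2, hS3, hS4, hS5⟩ := h h1 h3 n1 n3
    exact ⟨S, hS1, hS2, hS3, Or.inr (Or.inl ⟨hS4, hS5⟩)⟩
  · obtain ⟨S, hS1, hS2, hS3, hS4, hS5⟩ := h h2 h3 n2 n3
    exact ⟨S, hS1, hS2, hS3, Or.inr (Or.inr ⟨hS4, hS5⟩)⟩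

lemma claimC2 {z w : ℝ × ℝ} (hz2 : z.2 = 0) (hz1 : 0 < z.1) (hw : w ∈ F) (hwz : w ≠ z)
    (hT : ¬ (w.2 = 0 ∧ z.1 < w.1)) :
    ∃ S : Set (ℝ × ℝ), IsPreconnected S ∧ S ⊆ F ∧ z ∉ S ∧ w ∈ S ∧ ((0:ℝ), (0:ℝ)) ∈ S := by
  rcases lt_trichotomy w.2 0 with h2 | h2 | h2
  · obtain ⟨hwe, hw1⟩ := F_neg_snd hw h2
    refine ⟨(fun x => (x, -f x)) '' Iic 0, isPreconnected_Iic.image _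
      ((continuous_id.prodMk continuous_f.neg).continuousOn), ?_, ?_, ?_, ?_⟩
    · rintro _ ⟨x, -, rfl⟩; exact graph_negf_mem_F x
    · rintro ⟨x, hx, hxz⟩
      have : x = z.1 := congrArg Prod.fst hxz
      rw [this] at hx
      exact absurd (lt_of_lt_of_le hz1 hx) (lt_irrefl _)
    · exact ⟨w.1, mem_Iic.2 hw1.le, by show (w.1, -f w.1) = w; rw [← hwe]⟩
    · refine ⟨0, mem_Iic.2 le_rfl, ?_⟩
      show ((0:ℝ), -f 0) = ((0:ℝ), (0:ℝ))
      rw [f_of_nonneg le_rfl, neg_zero]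
  · -- w on the ray, before z
    have hw1 : 0 ≤ w.1 := F_zero_snd hw h2
    have hwz1 : w.1 < z.1 := by
      rcases lt_or_eq_of_le (not_lt.1 (fun h => hT ⟨h2, h⟩)) with h | h
      · exact h
      · exact absurd (Prod.ext h (by rw [h2, hz2])) hwz
    refine ⟨(fun x => (x, (0:ℝ))) '' Icc 0 w.1, isPreconnected_Icc.image _
      ((continuous_id.prodMk continuous_const).continuousOn), ?_, ?_, ?_, ?_⟩
    · rintro _ ⟨x, hx, rfl⟩; exact ray_mem_F hx.1
    · rintro ⟨x, hx, hxz⟩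
      have : x = z.1 := congrArg Prod.fst hxz
      rw [this] at hx
      linarith [hx.2]
    · exact ⟨w.1, ⟨hw1, le_rfl⟩, by show (w.1, (0:ℝ)) = w; rw [← h2]⟩
    · exact ⟨0, ⟨le_rfl, hw1⟩, rfl⟩
  · obtain ⟨hwe, hw1⟩ := F_pos_snd hw h2
    refine ⟨(fun x => (x, f x)) '' Iic 0, isPreconnected_Iic.image _
      ((continuous_id.prodMk continuous_f).continuousOn), ?_, ?_, ?_, ?_⟩
    · rintro _ ⟨x, -, rfl⟩; exact graph_f_mem_F x
    · rintro ⟨x, hx, hxz⟩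
      have : x = z.1 := congrArg Prod.fst hxz
      rw [this] at hx
      exact absurd (lt_of_lt_of_le hz1 hx) (lt_irrefl _)
    · exact ⟨w.1, mem_Iic.2 hw1.le, by show (w.1, f w.1) = w; rw [← hwe]⟩
    · exact ⟨0, mem_Iic.2 le_rfl, by show ((0:ℝ), f 0) = ((0:ℝ), (0:ℝ)); rw [f_of_nonneg le_rfl]⟩

lemma twoConn_zero {z w₁ w₂ w₃ : ℝ × ℝ} (hzF : z ∈ F) (hz2 : z.2 = 0) (hz0 : z ≠ ((0:ℝ), (0:ℝ)))
    (h1 : w₁ ∈ F) (h2 : w₂ ∈ F) (h3 : w₃ ∈ F)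
    (n1 : w₁ ≠ z) (n2 : w₂ ≠ z) (n3 : w₃ ≠ z) :
    ∃ S : Set (ℝ × ℝ), IsPreconnected S ∧ S ⊆ F ∧ z ∉ S ∧
      ((w₁ ∈ S ∧ w₂ ∈ S) ∨ (w₁ ∈ S ∧ w₃ ∈ S) ∨ (w₂ ∈ S ∧ w₃ ∈ S)) := by
  have hz1 : 0 < z.1 := by
    rcases lt_or_eq_of_le (F_zero_snd hzF hz2) with h | h
    · exact h
    · exact absurd (Prod.ext h.symm hz2) hz0
  have key : ∀ a b : ℝ × ℝ,
      (((a.2 = 0 ∧ z.1 < a.1) ∧ (b.2 = 0 ∧ z.1 < b.1)) ∨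
        (¬ (a.2 = 0 ∧ z.1 < a.1) ∧ ¬ (b.2 = 0 ∧ z.1 < b.1))) →
      a ∈ F → b ∈ F → a ≠ z → b ≠ z →
      ∃ S : Set (ℝ × ℝ), IsPreconnected S ∧ S ⊆ F ∧ z ∉ S ∧ a ∈ S ∧ b ∈ S := by
    rintro a b (⟨⟨ha2, ha1⟩, ⟨hb2, hb1⟩⟩ | ⟨ha, hb⟩) haF hbF haz hbz
    · refine ⟨(fun x => (x, (0:ℝ))) '' uIcc a.1 b.1, isPreconnected_uIcc.image _
        ((continuous_id.prodMk continuous_const).continuousOn), ?_, ?_, ?_, ?_⟩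
      · rintro _ ⟨x, hx, rfl⟩
        have : (0:ℝ) < x := lt_of_le_of_lt hz1.le (lt_of_lt_of_le (lt_min ha1 hb1) hx.1)
        exact ray_mem_F this.le
      · rintro ⟨x, hx, hxz⟩
        have hh : x = z.1 := congrArg Prod.fst hxz
        have := lt_of_lt_of_le (lt_min ha1 hb1) hx.1
        rw [hh] at this
        exact absurd this (lt_irrefl _)
      · exact ⟨a.1, left_mem_uIcc, by show (a.1, (0:ℝ)) = a; rw [← ha2]⟩
      · exact ⟨b.1, right_mem_uIcc, by show (b.1, (0:ℝ)) = b; rw [← hb2]⟩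
    · obtain ⟨Sa, pa, fa, za, wa, oa⟩ := claimC2 hz2 hz1 haF haz ha
      obtain ⟨Sb, pb, fb, zb, wb, ob⟩ := claimC2 hz2 hz1 hbF hbz hb
      exact ⟨Sa ∪ Sb, IsPreconnected.union _ oa ob pa pb,
        union_subset fa fb, fun h => h.elim za zb, Or.inl wa, Or.inr wb⟩
  have := pigeon (T := fun w : ℝ × ℝ => w.2 = 0 ∧ z.1 < w.1)
    (Q := fun a b => a ∈ F → b ∈ F → a ≠ z → b ≠ z →
      ∃ S : Set (ℝ × ℝ), IsPreconnected S ∧ S ⊆ F ∧ z ∉ S ∧ a ∈ S ∧ b ∈ S)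
    (fun a b h haF hbF haz hbz => key a b h haF hbF haz hbz) w₁ w₂ w₃
  rcases this with h | h | h
  · obtain ⟨S, hS1, hS2, hS3, hS4, hS5⟩ := h h1 h2 n1 n2
    exact ⟨S, hS1, hS2, hS3, Or.inl ⟨hS4, hS5⟩⟩
  · obtain ⟨S, hS1, hS2, hS3, hS4, hS5⟩ := h h1 h3 n1 n3
    exact ⟨S, hS1, hS2, hS3, Or.inr (Or.inl ⟨hS4, hS5⟩)⟩
  · obtain ⟨S, hS1, hS2, hS3, hS4, hS5⟩ := h h2 h3 n2 n3
    exact ⟨S, hS1, hS2, hS3, Or.inr (Or.inr ⟨hS4, hS5⟩)⟩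

lemma nu_mem_F {p : ℝ × ℝ} (hp : p ∈ F) : ((p.1, -p.2) : ℝ × ℝ) ∈ F := by
  rcases hp with h | h
  · right; show -p.2 = -f p.1; rw [h]
  · left; show -p.2 = f p.1; rw [h, neg_neg]

/-- Among any three points of `F` distinct from a non-origin point `z` of `F`,
two lie in a common preconnected subset of `F \ {z}`. -/
lemma twoConn {z w₁ w₂ w₃ : ℝ × ℝ} (hzF : z ∈ F) (hz0 : z ≠ ((0:ℝ), (0:ℝ)))
    (h1 : w₁ ∈ F) (h2 : w₂ ∈ F) (h3 : w₃ ∈ F)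
    (n1 : w₁ ≠ z) (n2 : w₂ ≠ z) (n3 : w₃ ≠ z) :
    ∃ S : Set (ℝ × ℝ), IsPreconnected S ∧ S ⊆ F ∧ z ∉ S ∧
      ((w₁ ∈ S ∧ w₂ ∈ S) ∨ (w₁ ∈ S ∧ w₃ ∈ S) ∨ (w₂ ∈ S ∧ w₃ ∈ S)) := by
  rcases lt_trichotomy z.2 0 with hz2 | hz2 | hz2
  · -- mirror the positive case
    have hnu : ∀ {a b : ℝ × ℝ}, a ≠ b → ((a.1, -a.2) : ℝ × ℝ) ≠ (b.1, -b.2) := by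
      intro a b hab h
      apply hab
      rw [Prod.mk.injEq] at h
      exact Prod.ext h.1 (neg_injective h.2)
    obtain ⟨S', hS'p, hS'F, hS'z, hpair⟩ := twoConn_pos (z := (z.1, -z.2))
      (w₁ := (w₁.1, -w₁.2)) (w₂ := (w₂.1, -w₂.2)) (w₃ := (w₃.1, -w₃.2))
      (nu_mem_F hzF) (by simpa using neg_pos.2 hz2)
      (nu_mem_F h1) (nu_mem_F h2) (nu_mem_F h3) (hnu n1) (hnu n2) (hnu n3)
    have hcont : Continuous (fun p : ℝ × ℝ => ((p.1, -p.2) : ℝ × ℝ)) :=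
      continuous_fst.prodMk continuous_snd.neg
    have hmemS : ∀ w : ℝ × ℝ, ((w.1, -w.2) : ℝ × ℝ) ∈ S' →
        w ∈ (fun p : ℝ × ℝ => ((p.1, -p.2) : ℝ × ℝ)) '' S' := by
      intro w hw
      exact ⟨(w.1, -w.2), hw, by show ((w.1, -(-w.2)) : ℝ × ℝ) = w; rw [neg_neg]⟩
    refine ⟨(fun p : ℝ × ℝ => ((p.1, -p.2) : ℝ × ℝ)) '' S',
      hS'p.image _ hcont.continuousOn, ?_, ?_, ?_⟩
    · rintro _ ⟨s, hs, rfl⟩; exact nu_mem_F (hS'F hs)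
    · rintro ⟨s, hs, hsz⟩
      apply hS'z
      have hsz' : (s.1, -s.2) = (z.1, z.2) := hsz
      rw [Prod.mk.injEq] at hsz'
      have : s = ((z.1, -z.2) : ℝ × ℝ) := by
        refine Prod.ext hsz'.1 ?_
        show s.2 = -z.2
        rw [← hsz'.2, neg_neg]
      rwa [this] at hs
    · rcases hpair with ⟨u, v⟩ | ⟨u, v⟩ | ⟨u, v⟩
      · exact Or.inl ⟨hmemS _ u, hmemS _ v⟩
      · exact Or.inr (Or.inl ⟨hmemS _ u, hmemS _ v⟩)
      · exact Or.inr (Or.inr ⟨hmemS _ u, hmemS _ v⟩)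
  · exact twoConn_zero hzF hz2 hz0 h1 h2 h3 n1 n2 n3
  · exact twoConn_pos hzF hz2 h1 h2 h3 n1 n2 n3

set_option maxHeartbeats 1000000 in
/-- There is no C¹ diffeomorphism of `ℝ²` taking `F` to `G`. -/
theorem no_C1_diffeo_F_to_G :
    ¬ ∃ φ ψ : ℝ × ℝ → ℝ × ℝ,
      ContDiff ℝ 1 φ ∧ ContDiff ℝ 1 ψ ∧
      Function.LeftInverse ψ φ ∧ Function.RightInverse ψ φ ∧
      φ '' F = G := by
  rintro ⟨φ, ψ, hφ, hψ, hl, hr, himg⟩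
  have hψG : ∀ y ∈ G, ψ y ∈ F := by
    intro y hy
    rw [← himg] at hy
    obtain ⟨x, hxF, rfl⟩ := hy
    rwa [hl x]
  set z := ψ ((0:ℝ), (0:ℝ)) with hzdef
  have hG0 : (((0:ℝ), (0:ℝ)) : ℝ × ℝ) ∈ G := Or.inl (by show (0:ℝ) = g 0; rw [g_of_nonneg le_rfl])
  have hzF : z ∈ F := hψG _ hG0
  have hφz : φ z = ((0:ℝ), (0:ℝ)) := hr _
  -- Lipschitz constants
  obtain ⟨Kψ, hKψ1, hKψ⟩ := exists_lip hψ 2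
  obtain ⟨Kφ, hKφ1, hKφ⟩ := exists_lip hφ (dist z 0 + 2 * Kψ + 2)
  have hKψ0 : 0 < Kψ := lt_of_lt_of_le zero_lt_one hKψ1
  have hKφ0 : 0 < Kφ := lt_of_lt_of_le zero_lt_one hKφ1
  set A : ℝ := 1 + Kφ + 2 * Kψ with hAdef
  have hA1 : 1 ≤ A := by simp only [hAdef]; linarith
  have hA0 : 0 < A := lt_of_lt_of_le zero_lt_one hA1
  set u : ℝ := 1 / A with hudef
  have hu0 : 0 < u := by positivity
  have hu1 : u ≤ 1 := (div_le_one hA0).2 hA1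
  set gu : ℝ := Real.exp (-1 / u ^ 2) with hgudef
  have hgu_eq : gu = Real.exp (-(1 / u ^ 2)) := by rw [hgudef]; exact congrArg Real.exp (by ring)
  have hgu0 : 0 < gu := Real.exp_pos _
  have hgu_le : gu ≤ u := by
    have h1 : gu ≤ u ^ 2 := by rw [hgu_eq]; exact exp_neg_one_div_le (by positivity)
    nlinarith
  set c : ℝ × ℝ := (-u, gu) with hcdef
  set d : ℝ × ℝ := (-u, -gu) with hddef
  set e : ℝ × ℝ := (u, 0) with hedef
  have hgneg : g (-u) = gu := by
    rw [g_of_neg (by linarith : -u < 0), hgudef, neg_sq]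
    exact congrArg Real.exp (by ring)
  have hcG : c ∈ G := Or.inl (by show gu = g (-u); rw [hgneg])
  have hdG : d ∈ G := Or.inr (by show -gu = -g (-u); rw [hgneg])
  have heG : e ∈ G := Or.inl (by show (0:ℝ) = g u; rw [g_of_nonneg hu0.le])
  -- distances between the sample points
  have hdist : ∀ a b : ℝ × ℝ, dist a b = max |a.1 - b.1| |a.2 - b.2| := by
    intro a b; rw [Prod.dist_eq, Real.dist_eq, Real.dist_eq]
  have habs_u : |(-u : ℝ) - 0| = u := by rw [sub_zero, abs_neg, abs_of_pos hu0]
  have hdc0 : dist c ((0:ℝ×ℝ)) = u := by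
    rw [hdist]
    show max |(-u : ℝ) - 0| |gu - 0| = u
    rw [habs_u, sub_zero, abs_of_pos hgu0]
    exact max_eq_left hgu_le
  have hdd0 : dist d ((0:ℝ×ℝ)) = u := by
    rw [hdist]
    show max |(-u : ℝ) - 0| |-gu - 0| = u
    rw [habs_u, sub_zero, abs_neg, abs_of_pos hgu0]
    exact max_eq_left hgu_le
  have hde0 : dist e ((0:ℝ×ℝ)) = u := by
    rw [hdist]
    show max |(u : ℝ) - 0| |(0:ℝ) - 0| = u
    rw [sub_zero, sub_zero, abs_of_pos hu0, abs_zero]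
    exact max_eq_left hu0.le
  have hdcd : dist c d = 2 * gu := by
    rw [hdist]
    show max |(-u : ℝ) - -u| |gu - -gu| = 2 * gu
    rw [sub_self, abs_zero, sub_neg_eq_add]
    rw [abs_of_pos (by linarith : (0:ℝ) < gu + gu)]
    rw [max_eq_right (by linarith : (0:ℝ) ≤ gu + gu)]
    ring
  have hdce : u ≤ dist c e := by
    rw [hdist]
    refine le_trans ?_ (le_max_left _ _)
    show u ≤ |(-u : ℝ) - u|
    rw [abs_sub_comm, abs_of_pos (by linarith : (0:ℝ) < u - -u)]
    linarith
  have hdde : u ≤ dist d e := by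
    rw [hdist]
    refine le_trans ?_ (le_max_left _ _)
    show u ≤ |(-u : ℝ) - u|
    rw [abs_sub_comm, abs_of_pos (by linarith : (0:ℝ) < u - -u)]
    linarith
  -- memberships in the small ball
  have hball1 : ∀ w : ℝ × ℝ, dist w 0 = u → w ∈ closedBall (0:ℝ×ℝ) 2 := by
    intro w hw
    rw [mem_closedBall, hw]; linarith
  have hc1 : c ∈ closedBall (0:ℝ×ℝ) 2 := hball1 c hdc0
  have hd1 : d ∈ closedBall (0:ℝ×ℝ) 2 := hball1 d hdd0
  have he1 : e ∈ closedBall (0:ℝ×ℝ) 2 := hball1 e hde0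
  have h01 : (0:ℝ×ℝ) ∈ closedBall (0:ℝ×ℝ) 2 := mem_closedBall_self (by norm_num)
  have h00 : ((0:ℝ), (0:ℝ)) = (0:ℝ×ℝ) := rfl
  -- the image points
  set p : ℝ × ℝ := ψ c with hpdef
  set q : ℝ × ℝ := ψ d with hqdef
  set r : ℝ × ℝ := ψ e with hrdef
  have hpF : p ∈ F := hψG c hcG
  have hqF : q ∈ F := hψG d hdG
  have hrF : r ∈ F := hψG e heG
  have hφp : φ p = c := hr c
  have hφq : φ q = d := hr d
  have hφr : φ r = e := hr e
  -- upper bounds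
  have hpz : dist p z ≤ Kψ * u := by
    have := hKψ c hc1 (0:ℝ×ℝ) h01
    rw [hdc0] at this
    rwa [hzdef, h00]
  have hqz : dist q z ≤ Kψ * u := by
    have := hKψ d hd1 (0:ℝ×ℝ) h01
    rw [hdd0] at this
    rwa [hzdef, h00]
  have hrz : dist r z ≤ Kψ * u := by
    have := hKψ e he1 (0:ℝ×ℝ) h01
    rw [hde0] at this
    rwa [hzdef, h00]
  -- memberships in the big ball
  set R : ℝ := dist z 0 + 2 * Kψ + 2 with hRdef
  have hKuKψ : Kψ * u ≤ 2 * Kψ := by nlinarith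
  have hzR : z ∈ closedBall (0:ℝ×ℝ) R := by
    rw [mem_closedBall]
    have : (0:ℝ) ≤ 2 * Kψ + 2 := by linarith
    simp only [hRdef]; linarith
  have hpR : p ∈ closedBall (0:ℝ×ℝ) R := by
    rw [mem_closedBall]
    calc dist p 0 ≤ dist p z + dist z 0 := dist_triangle _ _ _
    _ ≤ Kψ * u + dist z 0 := by linarith
    _ ≤ R := by simp only [hRdef]; linarith
  have hqR : q ∈ closedBall (0:ℝ×ℝ) R := by
    rw [mem_closedBall]
    calc dist q 0 ≤ dist q z + dist z 0 := dist_triangle _ _ _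
    _ ≤ Kψ * u + dist z 0 := by linarith
    _ ≤ R := by simp only [hRdef]; linarith
  have hrR : r ∈ closedBall (0:ℝ×ℝ) R := by
    rw [mem_closedBall]
    calc dist r 0 ≤ dist r z + dist z 0 := dist_triangle _ _ _
    _ ≤ Kψ * u + dist z 0 := by linarith
    _ ≤ R := by simp only [hRdef]; linarith
  -- lower bounds on distances to z
  have hlow : ∀ w : ℝ × ℝ, w ∈ closedBall (0:ℝ×ℝ) R → dist (φ w) (0:ℝ×ℝ) ≤ Kφ * dist w z := by
    intro w hw
    have := hKφ w hw z hzR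
    rwa [hφz, h00] at this
  have hpzl : u / Kφ ≤ dist p z := by
    have := hlow p hpR
    rw [hφp, hdc0] at this
    rw [div_le_iff₀ hKφ0]
    linarith [this, mul_comm Kφ (dist p z)]
  have hqzl : u / Kφ ≤ dist q z := by
    have := hlow q hqR
    rw [hφq, hdd0] at this
    rw [div_le_iff₀ hKφ0]
    linarith [this, mul_comm Kφ (dist q z)]
  have hrzl : u / Kφ ≤ dist r z := by
    have := hlow r hrR
    rw [hφr, hde0] at this
    rw [div_le_iff₀ hKφ0]
    linarith [this, mul_comm Kφ (dist r z)]
  have huK : 0 < u / Kφ := by positivity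
  have hpz0 : p ≠ z := by
    intro h; rw [h, dist_self] at hpzl; linarith
  have hqz0 : q ≠ z := by
    intro h; rw [h, dist_self] at hqzl; linarith
  have hrz0 : r ≠ z := by
    intro h; rw [h, dist_self] at hrzl; linarith
  -- the image-of-connected-set facts
  have himfacts : ∀ S : Set (ℝ × ℝ), IsPreconnected S → S ⊆ F → z ∉ S →
      φ '' S ⊆ G ∧ (((0:ℝ), (0:ℝ)) : ℝ × ℝ) ∉ φ '' S ∧ IsPreconnected (φ '' S) := by
    intro S hp' hf' hz'
    refine ⟨?_, ?_, hp'.image _ (hφ.continuous.continuousOn)⟩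
    · rintro _ ⟨x, hx, rfl⟩
      rw [← himg]
      exact mem_image_of_mem φ (hf' hx)
    · rintro ⟨x, hx, hx0⟩
      apply hz'
      have hxz : x = z := by rw [← hl x, hx0]
      rwa [← hxz]
  have kill1 : ∀ S : Set (ℝ × ℝ), IsPreconnected S → S ⊆ F → z ∉ S → p ∈ S → q ∈ S → False := by
    intro S h1 h2 h3 hp' hq'
    obtain ⟨hG', h0', hpre'⟩ := himfacts S h1 h2 h3
    refine sep₁ hG' h0' hpre' (a := c) (b := d) ⟨p, hp', hφp⟩ hgu0 ⟨q, hq', hφq⟩ ?_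
    show -gu ≤ 0
    linarith
  have kill2 : ∀ S : Set (ℝ × ℝ), IsPreconnected S → S ⊆ F → z ∉ S → p ∈ S → r ∈ S → False := by
    intro S h1 h2 h3 hp' hr'
    obtain ⟨hG', h0', hpre'⟩ := himfacts S h1 h2 h3
    exact sep₁ hG' h0' hpre' (a := c) (b := e) ⟨p, hp', hφp⟩ hgu0 ⟨r, hr', hφr⟩ le_rfl
  have kill3 : ∀ S : Set (ℝ × ℝ), IsPreconnected S → S ⊆ F → z ∉ S → q ∈ S → r ∈ S → False := by
    intro S h1 h2 h3 hq' hr'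
    obtain ⟨hG', h0', hpre'⟩ := himfacts S h1 h2 h3
    refine sep₂ hG' h0' hpre' (a := d) (b := e) ⟨q, hq', hφq⟩ ?_ ⟨r, hr', hφr⟩ le_rfl
    show -gu < 0
    linarith
  by_cases hz0 : z = (((0:ℝ), (0:ℝ)) : ℝ × ℝ)
  case neg =>
    -- z is not the branch point : three points in different components, contradiction
    obtain ⟨S, hS1, hS2, hS3, hpair⟩ := twoConn hzF hz0 hpF hqF hrF hpz0 hqz0 hrz0
    rcases hpair with ⟨hu', hv'⟩ | ⟨hu', hv'⟩ | ⟨hu', hv'⟩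
    · exact kill1 S hS1 hS2 hS3 hu' hv'
    · exact kill2 S hS1 hS2 hS3 hu' hv'
    · exact kill3 S hS1 hS2 hS3 hu' hv'
  case pos =>
    -- z is the branch point : quantitative contradiction
    have hdpq : dist p q ≤ Kψ * (2 * gu) := by
      have := hKψ c hc1 d hd1
      rwa [hdcd] at this
    have habs : |p.2 - q.2| ≤ dist p q := by
      rw [hdist]; exact le_max_right _ _
    have hquant : ∀ w : ℝ × ℝ, w ∈ F → w.1 < 0 → u / Kφ ≤ dist w z →
        f w.1 ≤ dist p q → False := by
      intro w hwF hw1 hwl hgap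
      set s : ℝ := -w.1 with hsdef
      have hs0 : 0 < s := by simp only [hsdef]; linarith
      have hfw : f w.1 = Real.exp (-(1 / s)) := by
        rw [f_of_neg hw1]
        congr 1
        rw [hsdef, one_div, one_div, inv_neg, neg_neg]
      have hfle : f w.1 ≤ s := f_le_neg_self hw1
      have hw2abs : |w.2| ≤ s := by
        rcases hwF with h' | h'
        · rw [h', abs_of_nonneg (f_nonneg _)]; exact hfle
        · rw [h', abs_neg, abs_of_nonneg (f_nonneg _)]; exact hfle
      have hdws : dist w z ≤ s := by
        rw [hz0, h00, hdist]
        have h1 : |w.1 - (0:ℝ×ℝ).1| = s := by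
          show |w.1 - 0| = s
          rw [sub_zero, abs_of_neg hw1]
        have h2 : |w.2 - (0:ℝ×ℝ).2| ≤ s := by
          show |w.2 - 0| ≤ s
          rw [sub_zero]; exact hw2abs
        exact max_le h1.le h2
      have hsu : u / Kφ ≤ s := le_trans hwl hdws
      have h1s : 1 / s ≤ Kφ / u := by
        rw [div_le_div_iff₀ hs0 hu0, one_mul]
        calc u ≤ s * Kφ := (div_le_iff₀ hKφ0).1 hsu
        _ = Kφ * s := mul_comm s Kφ
      have hchain : Real.exp (-(Kφ / u)) ≤ 2 * Kψ * gu := by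
        calc Real.exp (-(Kφ / u)) ≤ Real.exp (-(1 / s)) := Real.exp_le_exp.2 (by linarith)
        _ = f w.1 := hfw.symm
        _ ≤ dist p q := hgap
        _ ≤ Kψ * (2 * gu) := hdpq
        _ = 2 * Kψ * gu := by ring
      have hfinal : Real.exp (1 / u ^ 2 - Kφ / u) ≤ 2 * Kψ := by
        have hmul := mul_le_mul_of_nonneg_right hchain (Real.exp_pos (1 / u ^ 2)).le
        rw [← Real.exp_add] at hmul
        have hg : gu * Real.exp (1 / u ^ 2) = 1 := by
          rw [hgu_eq, ← Real.exp_add]; simp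
        calc Real.exp (1 / u ^ 2 - Kφ / u)
            = Real.exp (-(Kφ / u) + 1 / u ^ 2) := by rw [neg_add_eq_sub]
        _ ≤ 2 * Kψ * gu * Real.exp (1 / u ^ 2) := hmul
        _ = 2 * Kψ * (gu * Real.exp (1 / u ^ 2)) := by ring
        _ = 2 * Kψ := by rw [hg, mul_one]
      have hexp_lb : 1 / u ^ 2 - Kφ / u + 1 ≤ Real.exp (1 / u ^ 2 - Kφ / u) :=
        Real.add_one_le_exp _
      have h2A : 1 / u ^ 2 = A ^ 2 := by
        rw [hudef, div_pow, one_pow, one_div_one_div]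
      have h3A : Kφ / u = Kφ * A := by
        rw [hudef]
        field_simp
      have h4A : A - Kφ = 1 + 2 * Kψ := by rw [hAdef]; ring
      have harith : 1 + 2 * Kψ ≤ 1 / u ^ 2 - Kφ / u := by
        rw [h2A, h3A]
        have e1 : A ^ 2 - Kφ * A = A * (1 + 2 * Kψ) := by rw [← h4A]; ring
        rw [e1]
        exact le_mul_of_one_le_left (by linarith only [hKψ0]) hA1
      linarith only [hfinal, hexp_lb, harith, hKψ0]
    rcases lt_trichotomy p.2 0 with hp2 | hp2 | hp2 <;>
      rcases lt_trichotomy q.2 0 with hq2 | hq2 | hq2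
    · -- both negative : same branch
      obtain ⟨hpe, hp1⟩ := F_neg_snd hpF hp2
      obtain ⟨hqe, hq1⟩ := F_neg_snd hqF hq2
      refine kill1 ((fun x => (x, -f x)) '' uIcc p.1 q.1)
        (isPreconnected_uIcc.image _ ((continuous_id.prodMk continuous_f.neg).continuousOn))
        ?_ ?_ ?_ ?_
      · rintro _ ⟨x, -, rfl⟩; exact graph_negf_mem_F x
      · rw [hz0]
        rintro ⟨x, hx, hxz⟩
        have hx0 : x = 0 := congrArg Prod.fst hxz
        have := hx.2
        rw [hx0] at this
        rcases max_cases p.1 q.1 with ⟨hm, -⟩ | ⟨hm, -⟩ <;> rw [hm] at this <;> linarith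
      · exact ⟨p.1, left_mem_uIcc, by show (p.1, -f p.1) = p; rw [← hpe]⟩
      · exact ⟨q.1, right_mem_uIcc, by show (q.1, -f q.1) = q; rw [← hqe]⟩
    · -- p negative, q zero
      obtain ⟨hpe, hp1⟩ := F_neg_snd hpF hp2
      refine hquant p hpF hp1 hpzl (le_trans (le_abs.2 (Or.inr ?_)) habs)
      rw [hq2]
      linarith
    · -- p negative, q positive
      obtain ⟨hpe, hp1⟩ := F_neg_snd hpF hp2
      refine hquant p hpF hp1 hpzl (le_trans (le_abs.2 (Or.inr ?_)) habs)
      linarith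
    · -- p zero, q negative
      obtain ⟨hqe, hq1⟩ := F_neg_snd hqF hq2
      refine hquant q hqF hq1 hqzl (le_trans (le_abs.2 (Or.inl ?_)) habs)
      rw [hp2]
      linarith
    · -- both zero : both on the ray
      have hp1 : 0 ≤ p.1 := F_zero_snd hpF hp2
      have hq1 : 0 ≤ q.1 := F_zero_snd hqF hq2
      have hp1' : 0 < p.1 := by
        rcases lt_or_eq_of_le hp1 with h | h
        · exact h
        · exact absurd (hz0 ▸ Prod.ext h.symm hp2 : p = z) hpz0
      have hq1' : 0 < q.1 := by
        rcases lt_or_eq_of_le hq1 with h | h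
        · exact h
        · exact absurd (hz0 ▸ Prod.ext h.symm hq2 : q = z) hqz0
      refine kill1 ((fun x => (x, (0:ℝ))) '' uIcc p.1 q.1)
        (isPreconnected_uIcc.image _ ((continuous_id.prodMk continuous_const).continuousOn))
        ?_ ?_ ?_ ?_
      · rintro _ ⟨x, hx, rfl⟩
        have := lt_of_lt_of_le (lt_min hp1' hq1') hx.1
        exact ray_mem_F this.le
      · rw [hz0]
        rintro ⟨x, hx, hxz⟩
        have hx0 : x = 0 := congrArg Prod.fst hxz
        have := lt_of_lt_of_le (lt_min hp1' hq1') hx.1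
        rw [hx0] at this
        exact absurd this (lt_irrefl _)
      · exact ⟨p.1, left_mem_uIcc, by show (p.1, (0:ℝ)) = p; rw [← hp2]⟩
      · exact ⟨q.1, right_mem_uIcc, by show (q.1, (0:ℝ)) = q; rw [← hq2]⟩
    · -- p zero, q positive
      obtain ⟨hqe, hq1⟩ := F_pos_snd hqF hq2
      refine hquant q hqF hq1 hqzl (le_trans (le_abs.2 (Or.inr ?_)) habs)
      rw [hp2]
      linarith
    · -- p positive, q negative
      obtain ⟨hpe, hp1⟩ := F_pos_snd hpF hp2
      refine hquant p hpF hp1 hpzl (le_trans (le_abs.2 (Or.inl ?_)) habs)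
      linarith
    · -- p positive, q zero
      obtain ⟨hpe, hp1⟩ := F_pos_snd hpF hp2
      refine hquant p hpF hp1 hpzl (le_trans (le_abs.2 (Or.inl ?_)) habs)
      rw [hq2]
      linarith
    · -- both positive : same branch
      obtain ⟨hpe, hp1⟩ := F_pos_snd hpF hp2
      obtain ⟨hqe, hq1⟩ := F_pos_snd hqF hq2
      refine kill1 ((fun x => (x, f x)) '' uIcc p.1 q.1)
        (isPreconnected_uIcc.image _ ((continuous_id.prodMk continuous_f).continuousOn))
        ?_ ?_ ?_ ?_
      · rintro _ ⟨x, -, rfl⟩; exact graph_f_mem_F x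
      · rw [hz0]
        rintro ⟨x, hx, hxz⟩
        have hx0 : x = 0 := congrArg Prod.fst hxz
        have := hx.2
        rw [hx0] at this
        rcases max_cases p.1 q.1 with ⟨hm, -⟩ | ⟨hm, -⟩ <;> rw [hm] at this <;> linarith
      · exact ⟨p.1, left_mem_uIcc, by show (p.1, f p.1) = p; rw [← hpe]⟩
      · exact ⟨q.1, right_mem_uIcc, by show (q.1, f q.1) = q; rw [← hqe]⟩
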